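/- Let 1 ≤ κ ≤ N and define u* := max{ u ∈ {0,1,…,κ−1} : ((κ − u)/(N − u)) · L̃_{u+1} ≥ L_u } (the set is nonempty since L_0 = 0). If 0 < K < L_{u*+1} · ∑_{i=u*+1}^{N} 1/L_i, then V(κ,K,L) = (κ − u*) · (K/(N − u*)) · L̃_{u*+1}, and there is a maximizer c̃ with c̃_i = 0 for all i ∈ {1,…,u*}. -/

import Mathlib

open Finset

/-- The inner minimum `𝒱(c; κ, L)`: the minimum over subsets `U ⊆ {1,…,N}` with `|U| = κ`
of `∑_{i ∈ U} c_i L_i`. -/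
noncomputable def Vmin (N κ : ℕ) (L c : ℕ → ℝ) : ℝ :=
  sInf {x : ℝ | ∃ U : Finset ℕ, U ⊆ Finset.Icc 1 N ∧ U.card = κ ∧ x = ∑ i ∈ U, c i * L i}

/-- Membership in the constraint set `D_N(K) = {c ∈ [0,1]^N : ∑_{i=1}^N c_i ≤ K}`. -/
def Dmem (N : ℕ) (K : ℝ) (c : ℕ → ℝ) : Prop :=
  (∀ i ∈ Finset.Icc 1 N, 0 ≤ c i ∧ c i ≤ 1) ∧ (∑ i ∈ Finset.Icc 1 N, c i) ≤ K

/-- The max–min value `V(κ, K, L) = sup_{c ∈ D_N(K)} 𝒱(c; κ, L)`. -/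
noncomputable def Vval (N κ : ℕ) (K : ℝ) (L : ℕ → ℝ) : ℝ :=
  sSup {v : ℝ | ∃ c : ℕ → ℝ, Dmem N K c ∧ v = Vmin N κ L c}

/-- The harmonic-mean quantity `L̃_i := (N − i + 1) / (∑_{u=i}^N 1/L_u)`. -/
noncomputable def Lharm (N : ℕ) (L : ℕ → ℝ) (i : ℕ) : ℝ :=
  ((N : ℝ) - (i : ℝ) + 1) / ∑ u ∈ Finset.Icc i N, (L u)⁻¹

private lemma vminBddBelow (N κ : ℕ) (L c : ℕ → ℝ) :
    BddBelow {x : ℝ | ∃ U : Finset ℕ, U ⊆ Finset.Icc 1 N ∧ U.card = κ ∧ x = ∑ i ∈ U, c i * L i} := by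
  apply Set.Finite.bddBelow
  apply Set.Finite.subset (Finset.finite_toSet
    (((Finset.Icc 1 N).powerset).image (fun U => ∑ i ∈ U, c i * L i)))
  rintro x ⟨U, hU, -, rfl⟩
  simp only [Finset.coe_image, Set.mem_image, Finset.mem_coe, Finset.mem_powerset]
  exact ⟨U, hU, rfl⟩

private lemma fracSelect (y : ℕ → ℝ) :
    ∀ (κ : ℕ) (p : ℕ → ℝ) (s : Finset ℕ),
      (∀ i ∈ s, 0 ≤ y i) → (∀ i ∈ s, 0 ≤ p i) → (∀ i ∈ s, p i ≤ 1) →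
      ∑ i ∈ s, p i = (κ : ℝ) → κ ≤ s.card →
      ∃ T, T ⊆ s ∧ T.card = κ ∧ ∑ i ∈ T, y i ≤ ∑ i ∈ s, p i * y i := by
  intro κ
  induction κ with
  | zero =>
    intro p s hy hp0 _ _ _
    exact ⟨∅, Finset.empty_subset s, Finset.card_empty,
      by simpa using Finset.sum_nonneg fun i hi => mul_nonneg (hp0 i hi) (hy i hi)⟩
  | succ k ih =>
    intro p s hy hp0 hp1 hsum hcard
    have hs : s.Nonempty := Finset.card_pos.mp (lt_of_lt_of_le (Nat.succ_pos k) hcard)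
    obtain ⟨a, ha, hamin⟩ := s.exists_min_image y hs
    rcases Nat.eq_zero_or_pos k with rfl | hk
    · refine ⟨{a}, Finset.singleton_subset_iff.mpr ha, Finset.card_singleton a, ?_⟩
      have h1 : ∀ i ∈ s, p i * y a ≤ p i * y i :=
        fun i hi => mul_le_mul_of_nonneg_left (hamin i hi) (hp0 i hi)
      have h2 : ∑ i ∈ s, p i * y a ≤ ∑ i ∈ s, p i * y i := Finset.sum_le_sum h1
      rw [← Finset.sum_mul, hsum] at h2
      simpa using h2
    · have hpa1 : p a ≤ 1 := hp1 a ha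
      have hpa0 : 0 ≤ p a := hp0 a ha
      have hde : ∑ i ∈ s.erase a, p i = ((k:ℝ) + 1) - p a := by
        have h := Finset.add_sum_erase s p ha
        rw [hsum] at h
        push_cast at h ⊢
        linarith
      set d : ℝ := ((k:ℝ) + 1) - p a with hdd
      have hd : (k:ℝ) ≤ d := by rw [hdd]; linarith
      have hdpos : 0 < d := lt_of_lt_of_le (by exact_mod_cast hk) hd
      set t : ℝ := (k:ℝ) / d with htt
      have ht0 : 0 ≤ t := div_nonneg k.cast_nonneg hdpos.le
      have ht1 : t ≤ 1 := (div_le_one hdpos).mpr hd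
      have htd : t * d = (k:ℝ) := by
        rw [htt]
        exact div_mul_cancel₀ _ hdpos.ne'
      have hsum' : ∑ i ∈ s.erase a, t * p i = (k : ℝ) := by
        rw [← Finset.mul_sum, hde]
        exact htd
      obtain ⟨T', hT'sub, hT'card, hT'⟩ := ih (fun i => t * p i) (s.erase a)
        (fun i hi => hy i (Finset.mem_of_mem_erase hi))
        (fun i hi => mul_nonneg ht0 (hp0 i (Finset.mem_of_mem_erase hi)))
        (fun i hi => mul_le_one₀ ht1 (hp0 i (Finset.mem_of_mem_erase hi))
          (hp1 i (Finset.mem_of_mem_erase hi)))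
        hsum'
        (by rw [Finset.card_erase_of_mem ha]; omega)
      have haT' : a ∉ T' := fun h => (Finset.mem_erase.mp (hT'sub h)).1 rfl
      refine ⟨insert a T', ?_, ?_, ?_⟩
      · exact Finset.insert_subset ha (hT'sub.trans (Finset.erase_subset a s))
      · rw [Finset.card_insert_of_notMem haT', hT'card]
      · rw [Finset.sum_insert haT']
        set E := ∑ i ∈ s.erase a, p i * y i with hEE
        have hE : y a * d ≤ E := by
          have h1 : ∀ i ∈ s.erase a, p i * y a ≤ p i * y i := fun i hi =>
            mul_le_mul_of_nonneg_left (hamin i (Finset.mem_of_mem_erase hi))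
              (hp0 i (Finset.mem_of_mem_erase hi))
          have h2 := Finset.sum_le_sum h1
          rw [← Finset.sum_mul, hde] at h2
          calc y a * d = d * y a := mul_comm _ _
            _ ≤ E := h2
        have hT'E : ∑ i ∈ T', y i ≤ t * E := by
          refine hT'.trans (le_of_eq ?_)
          rw [hEE, Finset.mul_sum]
          exact Finset.sum_congr rfl fun i _ => by ring
        have hsplit : ∑ i ∈ s, p i * y i = p a * y a + E :=
          (Finset.add_sum_erase s (fun i => p i * y i) ha).symm
        rw [hsplit]
        have key : (1 - t) * (E - y a * d) ≥ 0 :=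
          mul_nonneg (by linarith) (by linarith)
        have key' : E - t * E - y a * d + t * (y a * d) ≥ 0 := by nlinarith [key]
        have h3 : t * (y a * d) = (k:ℝ) * y a := by rw [← htd]; ring
        have h4 : y a * d = ((k:ℝ) + 1) * y a - p a * y a := by rw [hdd]; ring
        linarith [key', h3, h4, hT'E]

private lemma Vmin_le {N κ : ℕ} {L c : ℕ → ℝ} {U : Finset ℕ}
    (hU : U ⊆ Finset.Icc 1 N) (hcard : U.card = κ) :
    Vmin N κ L c ≤ ∑ i ∈ U, c i * L i :=
  csInf_le (vminBddBelow N κ L c) ⟨U, hU, hcard, rfl⟩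

private lemma le_Vmin {N κ : ℕ} {L c : ℕ → ℝ} {v : ℝ} (hκN : κ ≤ N)
    (h : ∀ U : Finset ℕ, U ⊆ Finset.Icc 1 N → U.card = κ → v ≤ ∑ i ∈ U, c i * L i) :
    v ≤ Vmin N κ L c := by
  apply le_csInf
  · obtain ⟨U, hU, hcard⟩ := Finset.exists_subset_card_eq
      (s := Finset.Icc 1 N) (n := κ) (by simpa using hκN)
    exact ⟨_, U, hU, hcard, rfl⟩
  · rintro x ⟨U, hU, hc, rfl⟩; exact h U hU hc

/-- with `u*` the largest `u ∈ {0,…,κ−1}` with `((κ−u)/(N−u))·L̃_{u+1} ≥ L_u`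
(the set is nonempty since `L_0 = 0`), if `0 < K < L_{u*+1} ∑_{i=u*+1}^N 1/L_i` then
`V(κ,K,L) = (κ−u*) (K/(N−u*)) L̃_{u*+1}` and some maximizer `c̃` has `c̃_i = 0` for
`i ∈ {1,…,u*}`. -/
theorem stmt_3 (N : ℕ) (hN : 1 ≤ N) (L : ℕ → ℝ) (hL0 : L 0 = 0)
    (hLpos : ∀ i ∈ Finset.Icc 1 N, 0 < L i)
    (hLmono : ∀ i j : ℕ, 1 ≤ i → i ≤ j → j ≤ N → L i ≤ L j)
    (κ : ℕ) (hκ1 : 1 ≤ κ) (hκN : κ ≤ N)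
    (u : ℕ) (huκ : u < κ)
    (hu : L u ≤ ((κ : ℝ) - (u : ℝ)) / ((N : ℝ) - (u : ℝ)) * Lharm N L (u + 1))
    (humax : ∀ u' : ℕ, u' < κ →
      L u' ≤ ((κ : ℝ) - (u' : ℝ)) / ((N : ℝ) - (u' : ℝ)) * Lharm N L (u' + 1) → u' ≤ u)
    (K : ℝ) (hK0 : 0 < K)
    (hKlt : K < L (u + 1) * ∑ i ∈ Finset.Icc (u + 1) N, (L i)⁻¹) :
    Vval N κ K L = ((κ : ℝ) - (u : ℝ)) * (K / ((N : ℝ) - (u : ℝ))) * Lharm N L (u + 1) ∧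
    ∃ c : ℕ → ℝ, Dmem N K c ∧ Vmin N κ L c = Vval N κ K L ∧
      ∀ i ∈ Finset.Icc 1 u, c i = 0 := by
  classical
  have huN : u < N := lt_of_lt_of_le huκ hκN
  have hu1N : u + 1 ≤ N := huN
  set S : ℝ := ∑ i ∈ Finset.Icc (u+1) N, (L i)⁻¹ with hSdef
  have hLposIcc : ∀ i ∈ Finset.Icc (u+1) N, 0 < L i := by
    intro i hi
    rw [Finset.mem_Icc] at hi
    exact hLpos i (Finset.mem_Icc.mpr ⟨by omega, hi.2⟩)
  have hSpos : 0 < S := by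
    rw [hSdef]
    apply Finset.sum_pos
    · exact fun i hi => inv_pos.mpr (hLposIcc i hi)
    · exact ⟨u+1, Finset.mem_Icc.mpr ⟨le_refl _, hu1N⟩⟩
  have hNu : (u:ℝ) < (N:ℝ) := by exact_mod_cast huN
  have hκu : (u:ℝ) < (κ:ℝ) := by exact_mod_cast huκ
  have hL1pos : 0 < L (u+1) := hLpos _ (Finset.mem_Icc.mpr ⟨by omega, hu1N⟩)
  have hLharm : Lharm N L (u+1) = ((N:ℝ) - (u:ℝ)) / S := by
    unfold Lharm
    rw [← hSdef]
    push_cast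
    ring_nf
  have hLam : L u ≤ ((κ:ℝ) - (u:ℝ)) / S := by
    rw [hLharm] at hu
    have heq : ((κ:ℝ) - u) / ((N:ℝ) - u) * (((N:ℝ) - u) / S) = ((κ:ℝ) - u) / S := by
      have h1 : ((N:ℝ) - (u:ℝ)) ≠ 0 := by linarith
      have h2 : S ≠ 0 := hSpos.ne'
      field_simp
    linarith [hu, heq.symm.le, heq.le]
  -- key derived inequality: κ − u ≤ L (u+1) * S
  have hder : (κ:ℝ) - (u:ℝ) ≤ L (u+1) * S := by
    rcases eq_or_lt_of_le (Nat.succ_le_of_lt huκ) with heq | hlt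
    · have hmem : u + 1 ∈ Finset.Icc (u+1) N := Finset.mem_Icc.mpr ⟨le_refl _, hu1N⟩
      have hterm : (L (u+1))⁻¹ ≤ S := by
        rw [hSdef]
        exact Finset.single_le_sum (fun i hi => (inv_pos.mpr (hLposIcc i hi)).le) hmem
      have h1 : 1 ≤ L (u+1) * S := by
        calc (1:ℝ) = L (u+1) * (L (u+1))⁻¹ := (mul_inv_cancel₀ hL1pos.ne').symm
          _ ≤ L (u+1) * S := mul_le_mul_of_nonneg_left hterm hL1pos.le
      have h2 : (κ:ℝ) - (u:ℝ) = 1 := by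
        rw [← heq]; push_cast; ring
      linarith
    · have h2N : u + 2 ≤ N := by omega
      set S' : ℝ := ∑ i ∈ Finset.Icc (u+2) N, (L i)⁻¹ with hS'def
      have hS'pos : 0 < S' := by
        rw [hS'def]
        apply Finset.sum_pos
        · intro i hi
          rw [Finset.mem_Icc] at hi
          exact inv_pos.mpr (hLpos i (Finset.mem_Icc.mpr ⟨by omega, hi.2⟩))
        · exact ⟨u+2, Finset.mem_Icc.mpr ⟨le_refl _, h2N⟩⟩
      have hS : S = (L (u+1))⁻¹ + S' := by
        rw [hSdef, hS'def]
        rw [← Finset.add_sum_erase _ _ (Finset.mem_Icc.mpr ⟨le_refl (u+1), hu1N⟩)]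
        congr 1
        rw [Finset.Icc_erase_left, show Finset.Ioc (u+1) N = Finset.Icc (u+2) N from (Finset.Icc_add_one_left_eq_Ioc (u+1) N).symm]
      have hnot : ¬ (L (u+1) ≤ ((κ:ℝ) - ((u+1:ℕ):ℝ)) / ((N:ℝ) - ((u+1:ℕ):ℝ)) *
          Lharm N L ((u+1) + 1)) := by
        intro h
        have := humax (u+1) hlt h
        omega
      push_neg at hnot
      have hLh2 : Lharm N L (u+2) = ((N:ℝ) - (u:ℝ) - 1) / S' := by
        unfold Lharm
        rw [← hS'def]
        push_cast
        ring_nf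
      have hN1 : (0:ℝ) < (N:ℝ) - (u:ℝ) - 1 := by
        have : ((u:ℝ)) + 1 < (N:ℝ) := by exact_mod_cast (by omega : u + 1 < N)
        linarith
      have hfrac : ((κ:ℝ) - (u:ℝ) - 1) / S' < L (u+1) := by
        have h' := hnot
        rw [show (u+1) + 1 = u + 2 from rfl, hLh2] at h'
        push_cast at h'
        have heq2 : ((κ:ℝ) - ((u:ℝ)+1)) / ((N:ℝ) - ((u:ℝ)+1)) * (((N:ℝ) - (u:ℝ) - 1) / S')
            = ((κ:ℝ) - (u:ℝ) - 1) / S' := by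
          have h1 : ((N:ℝ) - ((u:ℝ)+1)) ≠ 0 := by linarith
          have h2 : S' ≠ 0 := hS'pos.ne'
          field_simp
          ring
        rw [heq2] at h'
        exact h'
      have h5 : (κ:ℝ) - (u:ℝ) - 1 < L (u+1) * S' := (div_lt_iff₀ hS'pos).mp hfrac
      have hone : L (u+1) * (L (u+1))⁻¹ = 1 := mul_inv_cancel₀ hL1pos.ne'
      rw [hS, mul_add, hone]
      linarith
  -- the candidate maximizer
  set ct : ℕ → ℝ := fun i => if i ∈ Finset.Icc (u+1) N then K / (S * L i) else 0 with hct
  have hctD : Dmem N K ct := by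
    constructor
    · intro i hi
      constructor
      · rw [hct]
        dsimp only
        split
        · rename_i h
          have := hLposIcc i h
          positivity
        · exact le_refl 0
      · rw [hct]
        dsimp only
        split
        · rename_i h
          have hLi := hLposIcc i h
          rw [div_le_one (by positivity)]
          have hmemh := Finset.mem_Icc.mp h
          have hLmon : L (u+1) ≤ L i := hLmono (u+1) i (by omega) hmemh.1 hmemh.2
          calc K ≤ L (u+1) * S := hKlt.le
            _ ≤ L i * S := by nlinarith
            _ = S * L i := mul_comm _ _
        · norm_num
    · have hsub : Finset.Icc (u+1) N ⊆ Finset.Icc 1 N := by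
        intro i hi
        rw [Finset.mem_Icc] at hi ⊢
        omega
      have h1 : ∑ i ∈ Finset.Icc 1 N, ct i = ∑ i ∈ Finset.Icc (u+1) N, ct i := by
        refine (Finset.sum_subset hsub fun x _ hx => ?_).symm
        rw [hct]
        dsimp only
        rw [if_neg hx]
      have h2 : ∑ i ∈ Finset.Icc (u+1) N, ct i = K := by
        have : ∀ i ∈ Finset.Icc (u+1) N, ct i = (K / S) * (L i)⁻¹ := by
          intro i hi
          have hLi0 : L i ≠ 0 := (hLposIcc i hi).ne'
          have hS0 : S ≠ 0 := hSpos.ne'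
          rw [hct]
          dsimp only
          rw [if_pos hi]
          field_simp
        rw [Finset.sum_congr rfl this, ← Finset.mul_sum, ← hSdef]
        exact div_mul_cancel₀ K hSpos.ne'
      rw [h1, h2]
  -- value of the candidate
  have hctVmin : Vmin N κ L ct = ((κ:ℝ) - (u:ℝ)) * K / S := by
    apply le_antisymm
    · have hsub : Finset.Icc 1 κ ⊆ Finset.Icc 1 N := Finset.Icc_subset_Icc_right hκN
      have hcard : (Finset.Icc 1 κ).card = κ := by simp [Nat.card_Icc]
      refine (Vmin_le hsub hcard).trans (le_of_eq ?_)
      have hsplit : ∑ i ∈ Finset.Icc 1 κ, ct i * L i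
          = ∑ i ∈ Finset.Icc 1 u, ct i * L i + ∑ i ∈ Finset.Icc (u+1) κ, ct i * L i := by
        rw [show Finset.Icc 1 κ = Finset.Ioc 0 κ from Finset.Icc_add_one_left_eq_Ioc 0 κ,
          show Finset.Icc 1 u = Finset.Ioc 0 u from Finset.Icc_add_one_left_eq_Ioc 0 u,
          show Finset.Icc (u+1) κ = Finset.Ioc u κ from Finset.Icc_add_one_left_eq_Ioc u κ,
          Finset.sum_Ioc_consecutive _ (Nat.zero_le u) huκ.le]
      have hz : ∑ i ∈ Finset.Icc 1 u, ct i * L i = 0 := by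
        apply Finset.sum_eq_zero
        intro i hi
        rw [Finset.mem_Icc] at hi
        rw [hct]
        dsimp only
        rw [if_neg (by rw [Finset.mem_Icc]; omega)]
        ring
      have hv : ∑ i ∈ Finset.Icc (u+1) κ, ct i * L i = ((κ:ℝ) - (u:ℝ)) * (K / S) := by
        have hterm : ∀ i ∈ Finset.Icc (u+1) κ, ct i * L i = K / S := by
          intro i hi
          rw [Finset.mem_Icc] at hi
          have hiN : i ∈ Finset.Icc (u+1) N := Finset.mem_Icc.mpr ⟨hi.1, le_trans hi.2 hκN⟩
          have hLi : 0 < L i := hLposIcc i hiN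
          have hLi0 : L i ≠ 0 := hLi.ne'
          have hS0 : S ≠ 0 := hSpos.ne'
          rw [hct]
          dsimp only
          rw [if_pos hiN]
          field_simp
        rw [Finset.sum_congr rfl hterm, Finset.sum_const, nsmul_eq_mul, Nat.card_Icc]
        congr 1
        have : κ + 1 - (u + 1) = κ - u := by omega
        rw [this, Nat.cast_sub huκ.le]
      rw [hsplit, hz, hv]
      ring
    · apply le_Vmin hκN
      intro U hU hcard
      set F := U.filter (fun i => i ∈ Finset.Icc (u+1) N) with hF
      have hsumU : ∑ i ∈ U, ct i * L i = ∑ i ∈ F, ct i * L i := by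
        refine (Finset.sum_subset (Finset.filter_subset _ _) fun x hx hxF => ?_).symm
        have hxn : x ∉ Finset.Icc (u+1) N := by
          intro h
          exact hxF (Finset.mem_filter.mpr ⟨hx, h⟩)
        rw [hct]
        dsimp only
        rw [if_neg hxn]
        ring
      have hterm : ∀ i ∈ F, ct i * L i = K / S := by
        intro i hi
        have hiN : i ∈ Finset.Icc (u+1) N := (Finset.mem_filter.mp hi).2
        have hLi : 0 < L i := hLposIcc i hiN
        have hLi0 : L i ≠ 0 := hLi.ne'
        have hS0 : S ≠ 0 := hSpos.ne'
        rw [hct]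
        dsimp only
        rw [if_pos hiN]
        field_simp
      have hcompl : U.filter (fun i => ¬ i ∈ Finset.Icc (u+1) N) ⊆ Finset.Icc 1 u := by
        intro i hi
        obtain ⟨hiU, hin⟩ := Finset.mem_filter.mp hi
        have h1 := Finset.mem_Icc.mp (hU hiU)
        rw [Finset.mem_Icc] at hin ⊢
        omega
      have hcards := Finset.card_filter_add_card_filter_not
        (s := U) (p := fun i => i ∈ Finset.Icc (u+1) N)
      have hcompl2 : (U.filter (fun i => ¬ i ∈ Finset.Icc (u+1) N)).card ≤ u := by
        have := Finset.card_le_card hcompl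
        simpa [Nat.card_Icc] using this
      have hFcard : κ ≤ F.card + u := by
        rw [hF]
        omega
      have hFcast : ((κ:ℝ) - (u:ℝ)) ≤ (F.card : ℝ) := by
        have : (κ:ℝ) ≤ (F.card : ℝ) + (u:ℝ) := by exact_mod_cast hFcard
        linarith
      rw [hsumU, Finset.sum_congr rfl hterm, Finset.sum_const, nsmul_eq_mul]
      have hKS : (0:ℝ) ≤ K / S := by positivity
      calc ((κ:ℝ) - (u:ℝ)) * K / S = ((κ:ℝ) - (u:ℝ)) * (K / S) := by ring
        _ ≤ (F.card : ℝ) * (K / S) := mul_le_mul_of_nonneg_right hFcast hKS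
  -- upper bound for every feasible c
  have hub : ∀ c : ℕ → ℝ, Dmem N K c → Vmin N κ L c ≤ ((κ:ℝ) - (u:ℝ)) * K / S := by
    rintro c ⟨hc01, hcK⟩
    set p : ℕ → ℝ := fun i => if i ≤ u then 1 else ((κ:ℝ) - (u:ℝ)) / (S * L i) with hpdef
    have hy0 : ∀ i ∈ Finset.Icc 1 N, 0 ≤ c i * L i :=
      fun i hi => mul_nonneg (hc01 i hi).1 (hLpos i hi).le
    have hp0 : ∀ i ∈ Finset.Icc 1 N, 0 ≤ p i := by
      intro i hi
      rw [hpdef]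
      dsimp only
      split
      · norm_num
      · have hLi := hLpos i hi
        have : (0:ℝ) ≤ (κ:ℝ) - (u:ℝ) := by linarith
        positivity
    have hp1 : ∀ i ∈ Finset.Icc 1 N, p i ≤ 1 := by
      intro i hi
      rw [hpdef]
      dsimp only
      split
      · exact le_refl 1
      · rename_i hiu
        have hui : u + 1 ≤ i := by omega
        have hiN := (Finset.mem_Icc.mp hi).2
        have hLi := hLpos i hi
        have hLmon : L (u+1) ≤ L i := hLmono (u+1) i (by omega) hui hiN
        rw [div_le_one (by positivity)]
        calc (κ:ℝ) - (u:ℝ) ≤ L (u+1) * S := hder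
          _ ≤ L i * S := by nlinarith
          _ = S * L i := mul_comm _ _
    have hpsum : ∑ i ∈ Finset.Icc 1 N, p i = (κ:ℝ) := by
      have hsplit : ∑ i ∈ Finset.Icc 1 N, p i
          = ∑ i ∈ Finset.Icc 1 u, p i + ∑ i ∈ Finset.Icc (u+1) N, p i := by
        rw [show Finset.Icc 1 N = Finset.Ioc 0 N from Finset.Icc_add_one_left_eq_Ioc 0 N,
          show Finset.Icc 1 u = Finset.Ioc 0 u from Finset.Icc_add_one_left_eq_Ioc 0 u,
          show Finset.Icc (u+1) N = Finset.Ioc u N from Finset.Icc_add_one_left_eq_Ioc u N,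
          Finset.sum_Ioc_consecutive _ (Nat.zero_le u) huN.le]
      have h1 : ∑ i ∈ Finset.Icc 1 u, p i = (u:ℝ) := by
        have : ∀ i ∈ Finset.Icc 1 u, p i = 1 := by
          intro i hi
          rw [Finset.mem_Icc] at hi
          rw [hpdef]
          dsimp only
          rw [if_pos hi.2]
        rw [Finset.sum_congr rfl this, Finset.sum_const, nsmul_eq_mul, Nat.card_Icc]
        simp
      have h2 : ∑ i ∈ Finset.Icc (u+1) N, p i = (κ:ℝ) - (u:ℝ) := by
        have hterm : ∀ i ∈ Finset.Icc (u+1) N, p i = (((κ:ℝ) - (u:ℝ)) / S) * (L i)⁻¹ := by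
          intro i hi
          have hi' := Finset.mem_Icc.mp hi
          have hLi := hLposIcc i hi
          have hLi0 : L i ≠ 0 := hLi.ne'
          have hS0 : S ≠ 0 := hSpos.ne'
          rw [hpdef]
          dsimp only
          rw [if_neg (by omega)]
          field_simp
        rw [Finset.sum_congr rfl hterm, ← Finset.mul_sum, ← hSdef]
        exact div_mul_cancel₀ _ hSpos.ne'
      rw [hsplit, h1, h2]
      ring
    have hcardN : κ ≤ (Finset.Icc 1 N).card := by simp [Nat.card_Icc]; omega
    obtain ⟨T, hTsub, hTcard, hTle⟩ := fracSelect (fun i => c i * L i) κ p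
      (Finset.Icc 1 N) hy0 hp0 hp1 hpsum hcardN
    refine (Vmin_le hTsub hTcard).trans (hTle.trans ?_)
    have hpoint : ∀ i ∈ Finset.Icc 1 N, p i * (c i * L i) ≤ (((κ:ℝ) - (u:ℝ)) / S) * c i := by
      intro i hi
      have hi' := Finset.mem_Icc.mp hi
      have hc0 := (hc01 i hi).1
      rw [hpdef]
      dsimp only
      split
      · rename_i hiu
        have huN' : u ≤ N := huN.le
        have hLu : L i ≤ L u := hLmono i u hi'.1 hiu huN'
        have : L i ≤ ((κ:ℝ) - (u:ℝ)) / S := le_trans hLu hLam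
        calc 1 * (c i * L i) = c i * L i := one_mul _
          _ ≤ c i * (((κ:ℝ) - (u:ℝ)) / S) := mul_le_mul_of_nonneg_left this hc0
          _ = (((κ:ℝ) - (u:ℝ)) / S) * c i := mul_comm _ _
      · rename_i hiu
        have hLi : 0 < L i := hLpos i hi
        have : ((κ:ℝ) - (u:ℝ)) / (S * L i) * (c i * L i) = (((κ:ℝ) - (u:ℝ)) / S) * c i := by
          have hLi0 : L i ≠ 0 := hLi.ne'
          have hS0 : S ≠ 0 := hSpos.ne'
          field_simp
        rw [this]
    calc ∑ i ∈ Finset.Icc 1 N, p i * (c i * L i)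
        ≤ ∑ i ∈ Finset.Icc 1 N, (((κ:ℝ) - (u:ℝ)) / S) * c i := Finset.sum_le_sum hpoint
      _ = (((κ:ℝ) - (u:ℝ)) / S) * ∑ i ∈ Finset.Icc 1 N, c i := by rw [Finset.mul_sum]
      _ ≤ (((κ:ℝ) - (u:ℝ)) / S) * K := by
          exact mul_le_mul_of_nonneg_left hcK (div_nonneg (by linarith) hSpos.le)
      _ = ((κ:ℝ) - (u:ℝ)) * K / S := by ring
  -- conclude
  set vstar : ℝ := ((κ:ℝ) - (u:ℝ)) * K / S with hvdef
  have hmem : vstar ∈ {v : ℝ | ∃ c : ℕ → ℝ, Dmem N K c ∧ v = Vmin N κ L c} :=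
    ⟨ct, hctD, hctVmin.symm⟩
  have hbdd : ∀ w ∈ {v : ℝ | ∃ c : ℕ → ℝ, Dmem N K c ∧ v = Vmin N κ L c}, w ≤ vstar := by
    rintro w ⟨c, hc, rfl⟩
    exact hub c hc
  have hVval : Vval N κ K L = vstar := by
    unfold Vval
    exact le_antisymm (csSup_le ⟨vstar, hmem⟩ hbdd) (le_csSup ⟨vstar, hbdd⟩ hmem)
  constructor
  · rw [hVval, hLharm, hvdef]
    have h1 : ((N:ℝ) - (u:ℝ)) ≠ 0 := by linarith
    have h2 : S ≠ 0 := hSpos.ne'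
    field_simp
  · refine ⟨ct, hctD, by rw [hctVmin, hVval], ?_⟩
    intro i hi
    rw [Finset.mem_Icc] at hi
    rw [hct]
    dsimp only
    rw [if_neg (by rw [Finset.mem_Icc]; omega)]
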